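/- Let h : X × X* → ℝ∪{+∞} be a convex lower semicontinuous function with h(x,x*) ≥ ⟨x,x*⟩ for all (x,x*) ∈ X × X* and h*(x*,x**) ≥ ⟨x*,x**⟩ for all (x*,x**) ∈ X* × X**. Then for every (x₀,x₀*) ∈ X × X*, inf_{(x,x*)∈X×X*} ( h_{(x₀,x₀*)}(x,x*) + ½‖x‖² + ½‖x*‖² ) = 0. -/

import Mathlib

noncomputable section

open NormedSpace

/-- The translate `h_{(x₀,x₀*)}` of a function on `X × X*`. -/
def transl {X : Type*} [NormedAddCommGroup X] [NormedSpace ℝ X]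
    (h : X × (X →L[ℝ] ℝ) → EReal) (w : X × (X →L[ℝ] ℝ)) :
    X × (X →L[ℝ] ℝ) → EReal :=
  fun p => h (p.1 + w.1, p.2 + w.2) - ((w.2 p.1 + p.2 w.1 + w.2 w.1 : ℝ) : EReal)

/-- The translate of a function on `X* × X**`. -/
def translD {X : Type*} [NormedAddCommGroup X] [NormedSpace ℝ X]
    (g : (X →L[ℝ] ℝ) × ((X →L[ℝ] ℝ) →L[ℝ] ℝ) → EReal)
    (v : (X →L[ℝ] ℝ) × ((X →L[ℝ] ℝ) →L[ℝ] ℝ)) :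
    (X →L[ℝ] ℝ) × ((X →L[ℝ] ℝ) →L[ℝ] ℝ) → EReal :=
  fun q => g (q.1 + v.1, q.2 + v.2) - ((v.2 q.1 + q.2 v.1 + v.2 v.1 : ℝ) : EReal)

/-- The conjugate `h* : X* × X** → ℝ ∪ {±∞}`,
`h*(x*,x**) = sup_{(y,y*)} ⟨y,x*⟩ + ⟨y*,x**⟩ − h(y,y*)`. -/
def conj {X : Type*} [NormedAddCommGroup X] [NormedSpace ℝ X]
    (h : X × (X →L[ℝ] ℝ) → EReal) :
    (X →L[ℝ] ℝ) × ((X →L[ℝ] ℝ) →L[ℝ] ℝ) → EReal :=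
  fun q => ⨆ p : X × (X →L[ℝ] ℝ), (((q.1 p.1 + q.2 p.2 : ℝ) : EReal) - h p)

/-- Convexity of an `EReal`-valued function. -/
def ConvexE {X : Type*} [NormedAddCommGroup X] [NormedSpace ℝ X]
    (h : X × (X →L[ℝ] ℝ) → EReal) : Prop :=
  ∀ p q : X × (X →L[ℝ] ℝ), ∀ a b : ℝ, 0 ≤ a → 0 ≤ b → a + b = 1 →
    h (a • p + b • q) ≤ (a : EReal) * h p + (b : EReal) * h q

/-- The auxiliary condition:
`inf_{(x,x*)} h_{(x₀,x₀*)}(x,x*) + ½‖x‖² + ½‖x*‖² = 0` for all `(x₀,x₀*)`. -/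
def AuxCond {X : Type*} [NormedAddCommGroup X] [NormedSpace ℝ X]
    (h : X × (X →L[ℝ] ℝ) → EReal) : Prop :=
  ∀ w : X × (X →L[ℝ] ℝ),
    (⨅ p : X × (X →L[ℝ] ℝ),
      (transl h w p + ((‖p.1‖ ^ 2 / 2 + ‖p.2‖ ^ 2 / 2 : ℝ) : EReal))) = 0

/-- Monotone operator (identified with its graph). -/
def MonotoneSet {X : Type*} [NormedAddCommGroup X] [NormedSpace ℝ X]
    (T : Set (X × (X →L[ℝ] ℝ))) : Prop :=
  ∀ p ∈ T, ∀ q ∈ T, 0 ≤ (p.2 - q.2) (p.1 - q.1)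

/-- Maximal monotone operator. -/
def MaximalMonotone {X : Type*} [NormedAddCommGroup X] [NormedSpace ℝ X]
    (T : Set (X × (X →L[ℝ] ℝ))) : Prop :=
  MonotoneSet T ∧ ∀ S : Set (X × (X →L[ℝ] ℝ)), MonotoneSet S → T ⊆ S → S = T

/-- The Fitzpatrick family of `T`. -/
def FitzFamily {X : Type*} [NormedAddCommGroup X] [NormedSpace ℝ X]
    (T : Set (X × (X →L[ℝ] ℝ))) : Set (X × (X →L[ℝ] ℝ) → EReal) :=
  {h | ConvexE h ∧ LowerSemicontinuous h ∧
      (∀ p : X × (X →L[ℝ] ℝ), (p.2 p.1 : EReal) ≤ h p) ∧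
      ∀ p ∈ T, h p = (p.2 p.1 : EReal)}

/-- `T` is of type (NI): `inf_{(y,y*)∈T} ⟨x*−y*, x**−Jy⟩ ≤ 0` for all `(x*,x**)`. -/
def TypeNI {X : Type*} [NormedAddCommGroup X] [NormedSpace ℝ X]
    (T : Set (X × (X →L[ℝ] ℝ))) : Prop :=
  ∀ q : (X →L[ℝ] ℝ) × ((X →L[ℝ] ℝ) →L[ℝ] ℝ),
    (⨅ p : T, (((q.2 - inclusionInDoubleDual ℝ X p.1.1) (q.1 - p.1.2) : ℝ) : EReal)) ≤ 0


-- ===== helpers =====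

lemma ereal_sub_real_ne_bot {x : EReal} (hx : x ≠ ⊥) (c : ℝ) : x - (c : EReal) ≠ ⊥ := by
  induction x with
  | bot => exact absurd rfl hx
  | coe a => rw [← EReal.coe_sub]; exact EReal.coe_ne_bot _
  | top => rw [EReal.top_sub_coe]; exact top_ne_bot

lemma real_sub_ereal_sub (a c : ℝ) {x : EReal} (hx : x ≠ ⊥) :
    (a : EReal) - (x - (c : EReal)) = ((a + c : ℝ) : EReal) - x := by
  induction x with
  | bot => exact absurd rfl hx
  | coe b => rw [← EReal.coe_sub, ← EReal.coe_sub, ← EReal.coe_sub, EReal.coe_eq_coe_iff]; ring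
  | top => rw [EReal.top_sub_coe, sub_eq_add_neg, sub_eq_add_neg, EReal.neg_top,
      EReal.add_bot, EReal.add_bot]

lemma ereal_mul_mono {a t : ℝ} (ha : 0 ≤ a) {x : EReal} (hx : x ≤ (t : EReal)) :
    (a : EReal) * x ≤ ((a * t : ℝ) : EReal) := by
  rcases eq_or_lt_of_le ha with h0 | hpos
  · simp [← h0]
  · induction x with
    | bot => rw [EReal.coe_mul_bot_of_pos hpos]; exact bot_le
    | coe b =>
        rw [← EReal.coe_mul, EReal.coe_le_coe_iff]
        exact mul_le_mul_of_nonneg_left (EReal.coe_le_coe_iff.1 hx) ha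
    | top => exact absurd hx (by simp)

lemma ereal_mul_sub_real {a : ℝ} (ha : 0 ≤ a) {x : EReal} (hx : x ≠ ⊥) (c : ℝ) :
    (a : EReal) * (x - (c : EReal)) = (a : EReal) * x - ((a * c : ℝ) : EReal) := by
  rcases eq_or_lt_of_le ha with h0 | hpos
  · simp [← h0]
  · induction x with
    | bot => exact absurd rfl hx
    | coe b => rw [← EReal.coe_sub, ← EReal.coe_mul, ← EReal.coe_mul, ← EReal.coe_sub,
        EReal.coe_eq_coe_iff]; ring
    | top =>
        rw [EReal.top_sub_coe, EReal.mul_top_of_pos (by exact_mod_cast hpos), EReal.top_sub_coe]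

lemma ereal_add_sub_add (A B : EReal) (c₁ c₂ : ℝ) :
    (A + B) - ((c₁ + c₂ : ℝ) : EReal) = (A - (c₁ : EReal)) + (B - (c₂ : EReal)) := by
  rw [sub_eq_add_neg, sub_eq_add_neg, sub_eq_add_neg, ← EReal.coe_neg, ← EReal.coe_neg,
    ← EReal.coe_neg, show (-(c₁ + c₂) : ℝ) = -c₁ + -c₂ by ring, EReal.coe_add]
  abel

lemma ereal_coe_sub_split {A B c : ℝ} (hAB : A = B + c) (x : EReal) :
    (A : EReal) - x = ((B : EReal) - x) + (c : EReal) := by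
  induction x with
  | bot => rw [EReal.coe_sub_bot, EReal.coe_sub_bot, EReal.top_add_coe]
  | coe b => rw [← EReal.coe_sub, ← EReal.coe_sub, ← EReal.coe_add, EReal.coe_eq_coe_iff]
             rw [hAB]; ring
  | top => rw [sub_eq_add_neg, sub_eq_add_neg, EReal.neg_top, EReal.add_bot, EReal.add_bot,
      EReal.bot_add]

lemma halfsq {a b r s n : ℝ} (ha : 0 ≤ a) (hb : 0 ≤ b) (hab : a + b = 1) (hr : 0 ≤ r)
    (hs : 0 ≤ s) (hn : 0 ≤ n) (h : n ≤ a * r + b * s) :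
    n ^ 2 / 2 ≤ a * (r ^ 2 / 2) + b * (s ^ 2 / 2) := by
  nlinarith [sq_nonneg (r - s), mul_nonneg ha hb, mul_self_le_mul_self hn h,
    mul_nonneg ha hr, mul_nonneg hb hs]

lemma norm_attain {Y : Type*} [NormedAddCommGroup Y] [NormedSpace ℝ Y]
    (ψ : Y →L[ℝ] ℝ) {δ : ℝ} (hδ : 0 < δ) :
    ∃ x : Y, ‖ψ‖ ^ 2 / 2 - δ ≤ ψ x - ‖x‖ ^ 2 / 2 := by
  by_cases hN : ‖ψ‖ = 0
  · exact ⟨0, by simp [hN]; linarith⟩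
  have hN' : 0 < ‖ψ‖ := (norm_nonneg _).lt_of_ne (Ne.symm hN)
  have hr : ‖ψ‖ - δ / ‖ψ‖ < ‖ψ‖ := by
    have : 0 < δ / ‖ψ‖ := div_pos hδ hN'
    linarith
  obtain ⟨x₀, hx₀, hgt⟩ := ψ.exists_lt_apply_of_lt_opNorm hr
  obtain ⟨x₁, hx₁, hgt'⟩ : ∃ x₁ : Y, ‖x₁‖ ≤ 1 ∧ ‖ψ‖ - δ / ‖ψ‖ < ψ x₁ := by
    rcases le_or_gt 0 (ψ x₀) with hc | hc
    · exact ⟨x₀, hx₀.le, by rwa [Real.norm_eq_abs, abs_of_nonneg hc] at hgt⟩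
    · refine ⟨-x₀, by simpa using hx₀.le, ?_⟩
      rw [map_neg]
      rwa [Real.norm_eq_abs, abs_of_neg hc] at hgt
  refine ⟨‖ψ‖ • x₁, ?_⟩
  have h1 : ψ (‖ψ‖ • x₁) = ‖ψ‖ * ψ x₁ := by rw [map_smul, smul_eq_mul]
  have h2 : ‖(‖ψ‖ : ℝ) • x₁‖ ≤ ‖ψ‖ := by
    rw [norm_smul, Real.norm_eq_abs, abs_of_pos hN']
    nlinarith
  have key : ‖ψ‖ * (‖ψ‖ - δ / ‖ψ‖) = ‖ψ‖ ^ 2 - δ := by field_simp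
  have h3 : ‖ψ‖ ^ 2 - δ ≤ ψ (‖ψ‖ • x₁) := by
    rw [h1, ← key]
    exact mul_le_mul_of_nonneg_left hgt'.le hN'.le
  nlinarith [norm_nonneg ((‖ψ‖ : ℝ) • x₁), sq_nonneg ‖(‖ψ‖ : ℝ) • x₁‖]

lemma comb_norm {M : Type*} [SeminormedAddCommGroup M] [NormedSpace ℝ M]
    {a b : ℝ} (ha : 0 ≤ a) (hb : 0 ≤ b) (z z' : M) :
    ‖a • z + b • z'‖ ≤ a * ‖z‖ + b * ‖z'‖ := by
  calc ‖a • z + b • z'‖ ≤ ‖a • z‖ + ‖b • z'‖ := norm_add_le _ _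
    _ ≤ ‖a‖ * ‖z‖ + ‖b‖ * ‖z'‖ := add_le_add (_root_.norm_smul_le _ _) (_root_.norm_smul_le _ _)
    _ = a * ‖z‖ + b * ‖z'‖ := by
        rw [Real.norm_eq_abs, Real.norm_eq_abs, abs_of_nonneg ha, abs_of_nonneg hb]

lemma pairing_nonneg {X : Type*} [NormedAddCommGroup X] [NormedSpace ℝ X]
    (p : X × (X →L[ℝ] ℝ)) : 0 ≤ p.2 p.1 + (‖p.1‖ ^ 2 / 2 + ‖p.2‖ ^ 2 / 2) := by
  have h1 := p.2.le_opNorm p.1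
  rw [Real.norm_eq_abs] at h1
  nlinarith [neg_abs_le (p.2 p.1), sq_nonneg (‖p.1‖ - ‖p.2‖)]

-- ===== core lemma =====

set_option maxHeartbeats 2000000 in
lemma core {X : Type*} [NormedAddCommGroup X] [NormedSpace ℝ X]
    (φ : X × (X →L[ℝ] ℝ) → EReal) (hconv : ConvexE φ)
    (hpi : ∀ p : X × (X →L[ℝ] ℝ), (p.2 p.1 : EReal) ≤ φ p)
    (hpistar : ∀ q : (X →L[ℝ] ℝ) × ((X →L[ℝ] ℝ) →L[ℝ] ℝ), (q.2 q.1 : EReal) ≤ conj φ q) :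
    (⨅ p : X × (X →L[ℝ] ℝ),
      (φ p + ((‖p.1‖ ^ 2 / 2 + ‖p.2‖ ^ 2 / 2 : ℝ) : EReal))) = 0 := by
  have hbot : ∀ p, φ p ≠ ⊥ := by
    intro p hb
    exact (EReal.bot_lt_coe _).not_ge (hb ▸ hpi p)
  have lower : (0 : EReal) ≤ ⨅ p : X × (X →L[ℝ] ℝ),
      (φ p + ((‖p.1‖ ^ 2 / 2 + ‖p.2‖ ^ 2 / 2 : ℝ) : EReal)) := by
    refine le_iInf fun p => ?_
    calc (0 : EReal) ≤ ((p.2 p.1 + (‖p.1‖ ^ 2 / 2 + ‖p.2‖ ^ 2 / 2) : ℝ) : EReal) := by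
          exact_mod_cast EReal.coe_nonneg.2 (pairing_nonneg p)
      _ = (p.2 p.1 : EReal) + ((‖p.1‖ ^ 2 / 2 + ‖p.2‖ ^ 2 / 2 : ℝ) : EReal) := EReal.coe_add _ _
      _ ≤ φ p + ((‖p.1‖ ^ 2 / 2 + ‖p.2‖ ^ 2 / 2 : ℝ) : EReal) := add_le_add_left (hpi p) _
  have hproper : ∃ p₀, φ p₀ ≠ ⊤ := by
    by_contra hcon
    push_neg at hcon
    have h0 := hpistar (0, 0)
    have hc : conj φ ((0 : X →L[ℝ] ℝ), (0 : (X →L[ℝ] ℝ) →L[ℝ] ℝ)) = ⊥ := by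
      refine iSup_eq_bot.2 fun p => ?_
      rw [hcon p]
      simp [sub_eq_add_neg]
    rw [hc] at h0
    exact (EReal.bot_lt_coe _).not_ge h0
  obtain ⟨p₀, hp₀⟩ := hproper
  refine le_antisymm ?_ lower
  by_contra hpos
  push_neg at hpos
  set lam := ⨅ p : X × (X →L[ℝ] ℝ),
      (φ p + ((‖p.1‖ ^ 2 / 2 + ‖p.2‖ ^ 2 / 2 : ℝ) : EReal)) with hlam
  have hφp₀ : φ p₀ = ((φ p₀).toReal : EReal) := (EReal.coe_toReal hp₀ (hbot p₀)).symm
  have hlamle : lam ≤ φ p₀ + ((‖p₀.1‖ ^ 2 / 2 + ‖p₀.2‖ ^ 2 / 2 : ℝ) : EReal) := iInf_le _ p₀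
  have hlamtop : lam ≠ ⊤ := by
    intro htp
    rw [htp, top_le_iff, hφp₀, ← EReal.coe_add] at hlamle
    exact EReal.coe_ne_top _ hlamle
  have hlambot : lam ≠ ⊥ := ne_of_gt (lt_of_le_of_lt bot_le hpos)
  set l : ℝ := lam.toReal with hldef
  have hl : lam = (l : EReal) := (EReal.coe_toReal hlamtop hlambot).symm
  have hlpos : 0 < l := by
    have := hpos
    rw [hl] at this
    exact_mod_cast this
  -- the two sets to separate
  set A : Set ((X × (X →L[ℝ] ℝ)) × ℝ) := {e | φ e.1 ≤ (e.2 : EReal)} with hA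
  set B : Set ((X × (X →L[ℝ] ℝ)) × ℝ) :=
    {e | e.2 + (‖e.1.1‖ ^ 2 / 2 + ‖e.1.2‖ ^ 2 / 2) < l} with hB
  have hA_conv : Convex ℝ A := by
    rintro ⟨p, t⟩ hp ⟨p', t'⟩ hp' a b ha hb hab
    simp only [hA, Set.mem_setOf_eq, Prod.smul_mk, Prod.mk_add_mk, smul_eq_mul] at hp hp' ⊢
    refine (hconv p p' a b ha hb hab).trans ?_
    calc (a : EReal) * φ p + (b : EReal) * φ p'
        ≤ ((a * t : ℝ) : EReal) + ((b * t' : ℝ) : EReal) :=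
          add_le_add (ereal_mul_mono ha hp) (ereal_mul_mono hb hp')
      _ = ((a * t + b * t' : ℝ) : EReal) := (EReal.coe_add _ _).symm
  have hB_conv : Convex ℝ B := by
    rintro ⟨p, t⟩ hp ⟨p', t'⟩ hp' a b ha hb hab
    simp only [hB, Set.mem_setOf_eq, Prod.smul_mk, Prod.mk_add_mk, smul_eq_mul] at hp hp' ⊢
    have e1 : ‖a • p.1 + b • p'.1‖ ^ 2 / 2 ≤ a * (‖p.1‖ ^ 2 / 2) + b * (‖p'.1‖ ^ 2 / 2) :=
      halfsq ha hb hab (norm_nonneg _) (norm_nonneg _) (norm_nonneg _) (comb_norm ha hb _ _)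
    have e2 : ‖a • p.2 + b • p'.2‖ ^ 2 / 2 ≤ a * (‖p.2‖ ^ 2 / 2) + b * (‖p'.2‖ ^ 2 / 2) :=
      halfsq ha hb hab (norm_nonneg _) (norm_nonneg _) (norm_nonneg _) (comb_norm ha hb _ _)
    have h3 : a * (t + (‖p.1‖ ^ 2 / 2 + ‖p.2‖ ^ 2 / 2))
        + b * (t' + (‖p'.1‖ ^ 2 / 2 + ‖p'.2‖ ^ 2 / 2)) < l := by
      rcases ha.eq_or_lt with h0 | hap
      · have hb1 : b = 1 := by linarith
        rw [← h0, hb1]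
        simpa using hp'
      · have e3 : a * (t + (‖p.1‖ ^ 2 / 2 + ‖p.2‖ ^ 2 / 2)) < a * l :=
          mul_lt_mul_of_pos_left hp hap
        have e4 : b * (t' + (‖p'.1‖ ^ 2 / 2 + ‖p'.2‖ ^ 2 / 2)) ≤ b * l :=
          mul_le_mul_of_nonneg_left hp'.le hb
        nlinarith
    have e5 : (a • p + b • p').1 = a • p.1 + b • p'.1 := rfl
    have e6 : (a • p + b • p').2 = a • p.2 + b • p'.2 := rfl
    rw [e5, e6]
    nlinarith [e1, e2, h3]
  have hB_open : IsOpen B := by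
    have : B = (fun e : (X × (X →L[ℝ] ℝ)) × ℝ =>
        e.2 + (‖e.1.1‖ ^ 2 / 2 + ‖e.1.2‖ ^ 2 / 2)) ⁻¹' (Set.Iio l) := rfl
    rw [this]
    refine Continuous.isOpen_preimage ?_ _ isOpen_Iio
    fun_prop
  have hdisj : Disjoint B A := by
    rw [Set.disjoint_left]
    rintro ⟨p, t⟩ hpB hpA
    simp only [hA, hB, Set.mem_setOf_eq] at hpB hpA
    have h1 : lam ≤ φ p + ((‖p.1‖ ^ 2 / 2 + ‖p.2‖ ^ 2 / 2 : ℝ) : EReal) := iInf_le _ p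
    have h2 : φ p + ((‖p.1‖ ^ 2 / 2 + ‖p.2‖ ^ 2 / 2 : ℝ) : EReal)
        ≤ ((t + (‖p.1‖ ^ 2 / 2 + ‖p.2‖ ^ 2 / 2) : ℝ) : EReal) := by
      rw [EReal.coe_add t]
      exact add_le_add_left hpA _
    rw [hl] at h1
    have h3 := EReal.coe_le_coe_iff.1 (h1.trans h2)
    linarith
  obtain ⟨f, u, hfB, hfA⟩ := geometric_hahn_banach_open hB_conv hB_open hA_conv hdisj
  set s : ℝ := f ((0 : X × (X →L[ℝ] ℝ)), (1 : ℝ)) with hs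
  set g : (X × (X →L[ℝ] ℝ)) →L[ℝ] ℝ :=
    f.comp (ContinuousLinearMap.inl ℝ (X × (X →L[ℝ] ℝ)) ℝ) with hg
  have hfsplit : ∀ (p : X × (X →L[ℝ] ℝ)) (t : ℝ), f (p, t) = g p + t * s := by
    intro p t
    have hdecomp : ((p, t) : (X × (X →L[ℝ] ℝ)) × ℝ)
        = ((p, (0 : ℝ)) : (X × (X →L[ℝ] ℝ)) × ℝ)
          + t • (((0 : X × (X →L[ℝ] ℝ)), (1 : ℝ)) : (X × (X →L[ℝ] ℝ)) × ℝ) := by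
      rw [Prod.ext_iff]
      constructor
      · simp
      · simp
    rw [hdecomp, map_add, map_smul, smul_eq_mul]
    rfl
  have hA₀ : ((p₀, (φ p₀).toReal) : (X × (X →L[ℝ] ℝ)) × ℝ) ∈ A := by
    simp only [hA, Set.mem_setOf_eq]
    exact hφp₀.le
  have hs_nonneg : 0 ≤ s := by
    by_contra hneg
    push_neg at hneg
    have hs0' : s ≠ 0 := ne_of_lt hneg
    set t : ℝ := min (l - 1) (u / s - 1) with ht
    have htB : (((0 : X × (X →L[ℝ] ℝ)), t) : (X × (X →L[ℝ] ℝ)) × ℝ) ∈ B := by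
      simp only [hB, Set.mem_setOf_eq, norm_zero]
      have : t ≤ l - 1 := min_le_left _ _
      norm_num
      linarith
    have h1 := hfB _ htB
    rw [hfsplit, map_zero, zero_add] at h1
    have h2 : t < u / s := by
      have : t ≤ u / s - 1 := min_le_right _ _
      linarith
    have h3 : u < t * s := by
      calc u = (u / s) * s := (div_mul_cancel₀ u hs0').symm
        _ < t * s := by exact mul_lt_mul_of_neg_right h2 hneg
    linarith
  have hs_pos : 0 < s := by
    rcases hs_nonneg.eq_or_lt with h0 | h
    · exfalso
      have h1 := hfA _ hA₀
      rw [hfsplit, ← h0, mul_zero, add_zero] at h1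
      have h2 := hfB (p₀, l - (‖p₀.1‖ ^ 2 / 2 + ‖p₀.2‖ ^ 2 / 2) - 1) (by
        simp only [hB, Set.mem_setOf_eq]
        linarith)
      rw [hfsplit, ← h0, mul_zero, add_zero] at h2
      linarith
    · exact h
  have hs0 : s ≠ 0 := ne_of_gt hs_pos
  -- fact 1 : boundary inequality
  have fact1 : ∀ p : X × (X →L[ℝ] ℝ),
      g p + (l - (‖p.1‖ ^ 2 / 2 + ‖p.2‖ ^ 2 / 2)) * s ≤ u := by
    intro p
    set cp : ℝ := ‖p.1‖ ^ 2 / 2 + ‖p.2‖ ^ 2 / 2 with hcp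
    have key : ∀ δ : ℝ, 0 < δ → g p + (l - cp - δ) * s < u := by
      intro δ hδ
      have hmem : ((p, l - cp - δ) : (X × (X →L[ℝ] ℝ)) × ℝ) ∈ B := by
        simp only [hB, Set.mem_setOf_eq, ← hcp]
        linarith
      have := hfB _ hmem
      rwa [hfsplit] at this
    by_contra hcon
    push_neg at hcon
    set δ : ℝ := (g p + (l - cp) * s - u) / s with hδdef
    have hδpos : 0 < δ := div_pos (by linarith) hs_pos
    have hδs : δ * s = g p + (l - cp) * s - u := by
      rw [hδdef, div_mul_cancel₀ _ hs0]
    have := key δ hδpos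
    nlinarith
  -- fact 2
  have fact2 : ∀ (p : X × (X →L[ℝ] ℝ)) (t : ℝ), φ p ≤ (t : EReal) → u ≤ g p + t * s := by
    intro p t hpt
    have := hfA (p, t) (by simpa only [hA, Set.mem_setOf_eq] using hpt)
    rwa [hfsplit] at this
  set q₁ : X →L[ℝ] ℝ := s⁻¹ • (g.comp (ContinuousLinearMap.inl ℝ X (X →L[ℝ] ℝ))) with hq₁
  set q₂ : (X →L[ℝ] ℝ) →L[ℝ] ℝ :=
    s⁻¹ • (g.comp (ContinuousLinearMap.inr ℝ X (X →L[ℝ] ℝ))) with hq₂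
  have hqsplit : ∀ p : X × (X →L[ℝ] ℝ), q₁ p.1 + q₂ p.2 = s⁻¹ * g p := by
    intro p
    have heq : ((p.1, (0 : X →L[ℝ] ℝ)) : X × (X →L[ℝ] ℝ)) + ((0 : X), p.2) = p := by
      rw [Prod.ext_iff]
      constructor <;> simp
    simp only [hq₁, hq₂, ContinuousLinearMap.smul_apply, ContinuousLinearMap.comp_apply,
      ContinuousLinearMap.inl_apply, ContinuousLinearMap.inr_apply, smul_eq_mul]
    rw [← mul_add, ← map_add, heq]
  -- conjugate bound
  have hconj : conj φ (-q₁, -q₂) ≤ ((-(u / s) : ℝ) : EReal) := by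
    refine iSup_le fun p => ?_
    by_cases hpt : φ p = ⊤
    · rw [hpt, sub_eq_add_neg, EReal.neg_top, EReal.add_bot]
      exact bot_le
    · have hpe : φ p = ((φ p).toReal : EReal) := (EReal.coe_toReal hpt (hbot p)).symm
      set t : ℝ := (φ p).toReal with htdef
      rw [hpe, ← EReal.coe_sub, EReal.coe_le_coe_iff]
      have h2 : u ≤ g p + t * s := fact2 p t hpe.le
      have h3 : (-q₁) p.1 + (-q₂) p.2 = -(s⁻¹ * g p) := by
        rw [ContinuousLinearMap.neg_apply, ContinuousLinearMap.neg_apply, ← neg_add,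
          hqsplit p]
      rw [h3]
      have h4 : u * s⁻¹ ≤ s⁻¹ * g p + t := by
        calc u * s⁻¹ ≤ (g p + t * s) * s⁻¹ :=
              mul_le_mul_of_nonneg_right h2 (inv_nonneg.2 hs_pos.le)
          _ = s⁻¹ * g p + t := by
              rw [add_mul, mul_assoc, mul_inv_cancel₀ hs0, mul_one, mul_comm]
      have h5 : u / s = u * s⁻¹ := div_eq_mul_inv u s
      linarith
  have hps := hpistar (-q₁, -q₂)
  have happ : ((-q₂) (-q₁) : ℝ) = q₂ q₁ := by simp
  have hineq1 : (q₂ q₁ : ℝ) ≤ -(u / s) := by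
    have := hps.trans hconj
    rw [show ((-q₁, -q₂) : (X →L[ℝ] ℝ) × ((X →L[ℝ] ℝ) →L[ℝ] ℝ)).2
        ((-q₁, -q₂) : (X →L[ℝ] ℝ) × ((X →L[ℝ] ℝ) →L[ℝ] ℝ)).1 = (-q₂) (-q₁) from rfl,
      happ] at this
    exact_mod_cast this
  have hcu_le : u / s ≤ ‖q₂‖ * ‖q₁‖ := by
    have h6 := q₂.le_opNorm q₁
    rw [Real.norm_eq_abs] at h6
    linarith [neg_le_abs (q₂ q₁)]
  have fact1' : ∀ p : X × (X →L[ℝ] ℝ),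
      s⁻¹ * g p + (l - (‖p.1‖ ^ 2 / 2 + ‖p.2‖ ^ 2 / 2)) ≤ u / s := by
    intro p
    have h7 : (g p + (l - (‖p.1‖ ^ 2 / 2 + ‖p.2‖ ^ 2 / 2)) * s) * s⁻¹ ≤ u * s⁻¹ :=
      mul_le_mul_of_nonneg_right (fact1 p) (inv_nonneg.2 hs_pos.le)
    have h8 : (g p + (l - (‖p.1‖ ^ 2 / 2 + ‖p.2‖ ^ 2 / 2)) * s) * s⁻¹
        = s⁻¹ * g p + (l - (‖p.1‖ ^ 2 / 2 + ‖p.2‖ ^ 2 / 2)) := by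
          rw [add_mul, mul_assoc, mul_inv_cancel₀ hs0, mul_one, mul_comm]
    rw [h8] at h7
    rw [div_eq_mul_inv]
    exact h7
  have main : ‖q₁‖ ^ 2 / 2 + ‖q₂‖ ^ 2 / 2 + l ≤ u / s := by
    by_contra hcon
    push_neg at hcon
    set δ : ℝ := (‖q₁‖ ^ 2 / 2 + ‖q₂‖ ^ 2 / 2 + l - u / s) / 3 with hδdef
    have hδpos : 0 < δ := by
      rw [hδdef]
      linarith
    obtain ⟨x, hx⟩ := norm_attain q₁ hδpos
    obtain ⟨y, hy⟩ := norm_attain q₂ hδpos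
    have h9 := fact1' (x, y)
    rw [← hqsplit (x, y)] at h9
    simp only at h9
    linarith
  nlinarith [main, hcu_le, sq_nonneg (‖q₁‖ - ‖q₂‖), hlpos]

-- ===== glue lemmas =====

lemma affine_comb {M : Type*} [AddCommGroup M] [Module ℝ M] {a b : ℝ} (hab : a + b = 1)
    (x y wc : M) : a • x + b • y + wc = a • (x + wc) + b • (y + wc) := by
  have hww : a • wc + b • wc = wc := by rw [← add_smul, hab, one_smul]
  have hexp : a • (x + wc) + b • (y + wc) = a • x + b • y + (a • wc + b • wc) := by
    rw [smul_add, smul_add]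
    abel
  rw [hexp, hww]

lemma transl_pi {X : Type*} [NormedAddCommGroup X] [NormedSpace ℝ X]
    (h : X × (X →L[ℝ] ℝ) → EReal) (w : X × (X →L[ℝ] ℝ))
    (hpi : ∀ p : X × (X →L[ℝ] ℝ), (p.2 p.1 : EReal) ≤ h p) :
    ∀ p : X × (X →L[ℝ] ℝ), (p.2 p.1 : EReal) ≤ transl h w p := by
  intro p
  have h1 := hpi (p.1 + w.1, p.2 + w.2)
  simp only [transl]
  have h2 : (p.2 p.1 : ℝ)
      = (p.2 + w.2) (p.1 + w.1) - (w.2 p.1 + p.2 w.1 + w.2 w.1) := by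
    simp only [ContinuousLinearMap.add_apply, map_add]
    ring
  rw [h2, EReal.coe_sub, sub_eq_add_neg, sub_eq_add_neg]
  exact add_le_add_left h1 _

lemma transl_conv {X : Type*} [NormedAddCommGroup X] [NormedSpace ℝ X]
    (h : X × (X →L[ℝ] ℝ) → EReal) (w : X × (X →L[ℝ] ℝ))
    (hbot : ∀ p, h p ≠ ⊥) (hconv : ConvexE h) : ConvexE (transl h w) := by
  intro p q a b ha hb hab
  set rp : X × (X →L[ℝ] ℝ) := (p.1 + w.1, p.2 + w.2) with hrp
  set rq : X × (X →L[ℝ] ℝ) := (q.1 + w.1, q.2 + w.2) with hrq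
  simp only [transl]
  have hpt : (((a • p + b • q).1 + w.1, (a • p + b • q).2 + w.2) : X × (X →L[ℝ] ℝ))
      = a • rp + b • rq := by
    rw [Prod.ext_iff]
    exact ⟨affine_comb hab p.1 q.1 w.1, affine_comb hab p.2 q.2 w.2⟩
  have hL : (w.2 (a • p + b • q).1 + (a • p + b • q).2 w.1 + w.2 w.1 : ℝ)
      = a * (w.2 p.1 + p.2 w.1 + w.2 w.1) + b * (w.2 q.1 + q.2 w.1 + w.2 w.1) := by
    have e1 : (a • p + b • q).1 = a • p.1 + b • q.1 := rfl
    have e2 : (a • p + b • q).2 = a • p.2 + b • q.2 := rfl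
    rw [e1, e2, map_add, map_smul, map_smul, ContinuousLinearMap.add_apply,
      ContinuousLinearMap.smul_apply, ContinuousLinearMap.smul_apply]
    simp only [smul_eq_mul]
    linear_combination (-(w.2 w.1)) * hab
  rw [hpt, hL]
  calc h (a • rp + b • rq)
        - ((a * (w.2 p.1 + p.2 w.1 + w.2 w.1) + b * (w.2 q.1 + q.2 w.1 + w.2 w.1) : ℝ) : EReal)
      ≤ ((a : EReal) * h rp + (b : EReal) * h rq)
        - ((a * (w.2 p.1 + p.2 w.1 + w.2 w.1) + b * (w.2 q.1 + q.2 w.1 + w.2 w.1) : ℝ) : EReal) := by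
        rw [sub_eq_add_neg, sub_eq_add_neg]
        exact add_le_add_left (hconv rp rq a b ha hb hab) _
    _ = ((a : EReal) * h rp - ((a * (w.2 p.1 + p.2 w.1 + w.2 w.1) : ℝ) : EReal))
        + ((b : EReal) * h rq - ((b * (w.2 q.1 + q.2 w.1 + w.2 w.1) : ℝ) : EReal)) :=
        ereal_add_sub_add _ _ _ _
    _ = (a : EReal) * (h rp - ((w.2 p.1 + p.2 w.1 + w.2 w.1 : ℝ) : EReal))
        + (b : EReal) * (h rq - ((w.2 q.1 + q.2 w.1 + w.2 w.1 : ℝ) : EReal)) := by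
        rw [ereal_mul_sub_real ha (hbot rp) _, ereal_mul_sub_real hb (hbot rq) _]

lemma transl_conj_pi {X : Type*} [NormedAddCommGroup X] [NormedSpace ℝ X]
    (h : X × (X →L[ℝ] ℝ) → EReal) (w : X × (X →L[ℝ] ℝ))
    (hbot : ∀ p, h p ≠ ⊥)
    (hpistar : ∀ q : (X →L[ℝ] ℝ) × ((X →L[ℝ] ℝ) →L[ℝ] ℝ), (q.2 q.1 : EReal) ≤ conj h q) :
    ∀ q : (X →L[ℝ] ℝ) × ((X →L[ℝ] ℝ) →L[ℝ] ℝ), (q.2 q.1 : EReal) ≤ conj (transl h w) q := by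
  intro q
  set q' : (X →L[ℝ] ℝ) × ((X →L[ℝ] ℝ) →L[ℝ] ℝ) :=
    (q.1 + w.2, q.2 + inclusionInDoubleDual ℝ X w.1) with hq'
  set cst : ℝ := q.1 w.1 + q.2 w.2 + w.2 w.1 with hcst
  have claim : ∀ r : X × (X →L[ℝ] ℝ),
      ((q'.1 r.1 + q'.2 r.2 : ℝ) : EReal) - h r ≤ (conj (transl h w) q) + (cst : EReal) := by
    intro r
    set pr : X × (X →L[ℝ] ℝ) := (r.1 - w.1, r.2 - w.2) with hpr
    have hAB : (q'.1 r.1 + q'.2 r.2 : ℝ)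
        = ((q.1 pr.1 + q.2 pr.2) + (w.2 pr.1 + pr.2 w.1 + w.2 w.1)) + cst := by
      simp only [hq', hpr, hcst, map_sub, map_add, ContinuousLinearMap.add_apply,
        ContinuousLinearMap.sub_apply, NormedSpace.dual_def]
      ring
    have hterm : ((q'.1 r.1 + q'.2 r.2 : ℝ) : EReal) - h r
        = (((q.1 pr.1 + q.2 pr.2 : ℝ) : EReal) - transl h w pr) + (cst : EReal) := by
      rw [ereal_coe_sub_split hAB (h r)]
      congr 1
      have hr1 : pr.1 + w.1 = r.1 := sub_add_cancel _ _
      have hr2 : pr.2 + w.2 = r.2 := sub_add_cancel _ _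
      show _ = ((q.1 pr.1 + q.2 pr.2 : ℝ) : EReal)
        - (h (pr.1 + w.1, pr.2 + w.2) - ((w.2 pr.1 + pr.2 w.1 + w.2 w.1 : ℝ) : EReal))
      rw [hr1, hr2]
      have hre : ((r.1, r.2) : X × (X →L[ℝ] ℝ)) = r := rfl
      rw [hre, real_sub_ereal_sub _ _ (hbot r)]
    rw [hterm]
    refine add_le_add_left ?_ _
    exact le_iSup (fun p : X × (X →L[ℝ] ℝ) =>
      (((q.1 p.1 + q.2 p.2 : ℝ) : EReal) - transl h w p)) pr
  have H2 : conj h q' ≤ conj (transl h w) q + (cst : EReal) := iSup_le claim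
  have H := (hpistar q').trans H2
  have hqq : (q'.2 q'.1 : ℝ) = q.2 q.1 + cst := by
    simp only [hq', hcst, ContinuousLinearMap.add_apply, map_add, NormedSpace.dual_def]
    ring
  rw [hqq, EReal.coe_add] at H
  exact (EReal.addLECancellable_coe cst).add_le_add_iff_right.1 H


theorem stmt_3 {X : Type*} [NormedAddCommGroup X] [NormedSpace ℝ X] [CompleteSpace X]
    (h : X × (X →L[ℝ] ℝ) → EReal) (hbot : ∀ p, h p ≠ ⊥) (hconv : ConvexE h)
    (hlsc : LowerSemicontinuous h)
    (hpi : ∀ p : X × (X →L[ℝ] ℝ), (p.2 p.1 : EReal) ≤ h p)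
    (hpistar : ∀ q : (X →L[ℝ] ℝ) × ((X →L[ℝ] ℝ) →L[ℝ] ℝ), (q.2 q.1 : EReal) ≤ conj h q) :
    AuxCond h := by
  intro w
  exact core (transl h w) (transl_conv h w hbot hconv) (transl_pi h w hpi)
    (transl_conj_pi h w hbot hpistar)

end
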